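/- Let Q be a symmetric positive definite matrix in R^{n×n} and P be an n×m real matrix with full column rank. Then the block matrix J = [[-Q, -P], [P^T, 0]] is Hurwitz, i.e., every eigenvalue of J has strictly negative real part. -/

import Mathlib

open Matrix

/-- A real square matrix is Hurwitz if all of its complex eigenvalues have
strictly negative real part. -/
def IsHurwitz {ι : Type*} [Fintype ι] [DecidableEq ι] (A : Matrix ι ι ℝ) : Prop :=
  ∀ μ ∈ spectrum ℂ (A.map Complex.ofReal), μ.re < 0

section Aux

open Complex

/-- The real part of `xᴴ (M.map ofReal) x` equals `aᵀ M a + bᵀ M b` where `a, b` are the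
real and imaginary parts of `x`. -/
lemma re_star_dot_map_mulVec {k : ℕ} (M : Matrix (Fin k) (Fin k) ℝ) (x : Fin k → ℂ) :
    (star x ⬝ᵥ (M.map Complex.ofReal) *ᵥ x).re =
      (fun i => (x i).re) ⬝ᵥ M *ᵥ (fun i => (x i).re)
        + (fun i => (x i).im) ⬝ᵥ M *ᵥ (fun i => (x i).im) := by
  simp only [dotProduct, mulVec, Matrix.map_apply, Pi.star_apply, Finset.mul_sum,
    Complex.re_sum]
  rw [← Finset.sum_add_distrib]
  refine Finset.sum_congr rfl fun i _ => ?_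
  rw [← Finset.sum_add_distrib]
  refine Finset.sum_congr rfl fun j _ => ?_
  simp only [Complex.mul_re, Complex.mul_im, RCLike.star_def, Complex.conj_re,
    Complex.conj_im, Complex.ofReal_re, Complex.ofReal_im]
  ring

lemma star_dot_self_re {k : ℕ} (x : Fin k → ℂ) :
    (star x ⬝ᵥ x).re = ∑ i, Complex.normSq (x i) := by
  simp only [dotProduct, Pi.star_apply, Complex.re_sum]
  refine Finset.sum_congr rfl fun i _ => ?_
  simp only [Complex.mul_re, Complex.normSq_apply, RCLike.star_def, Complex.conj_re,
    Complex.conj_im]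
  ring

lemma star_dot_self_im {k : ℕ} (x : Fin k → ℂ) :
    (star x ⬝ᵥ x).im = 0 := by
  simp only [dotProduct, Pi.star_apply, Complex.im_sum]
  refine Finset.sum_eq_zero fun i _ => ?_
  simp only [Complex.mul_im, RCLike.star_def, Complex.conj_re, Complex.conj_im]
  ring

lemma posdef_map_re_pos {k : ℕ} {Q : Matrix (Fin k) (Fin k) ℝ} (hQ : Q.PosDef)
    (x : Fin k → ℂ) (hx : x ≠ 0) :
    0 < (star x ⬝ᵥ (Q.map Complex.ofReal) *ᵥ x).re := by
  rw [re_star_dot_map_mulVec]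
  set a : Fin k → ℝ := fun i => (x i).re with ha
  set b : Fin k → ℝ := fun i => (x i).im with hb
  have hab : a ≠ 0 ∨ b ≠ 0 := by
    by_contra h
    push_neg at h
    refine hx (funext fun i => Complex.ext ?_ ?_)
    · simpa using congrFun h.1 i
    · simpa using congrFun h.2 i
  have hQ' := hQ.posSemidef
  rcases hab with h | h
  · have h1 : 0 < star a ⬝ᵥ Q *ᵥ a := hQ.dotProduct_mulVec_pos h
    have h2 : 0 ≤ star b ⬝ᵥ Q *ᵥ b := hQ'.dotProduct_mulVec_nonneg b
    simp only [star_trivial] at h1 h2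
    linarith
  · have h1 : 0 ≤ star a ⬝ᵥ Q *ᵥ a := hQ'.dotProduct_mulVec_nonneg a
    have h2 : 0 < star b ⬝ᵥ Q *ᵥ b := hQ.dotProduct_mulVec_pos h
    simp only [star_trivial] at h1 h2
    linarith

lemma full_rank_map_mulVec_eq_zero {k l : ℕ} {P : Matrix (Fin k) (Fin l) ℝ}
    (hP : P.rank = l) {y : Fin l → ℂ} (h : (P.map Complex.ofReal) *ᵥ y = 0) : y = 0 := by
  have hker : LinearMap.ker P.mulVecLin = ⊥ := by
    have h1 := LinearMap.finrank_range_add_finrank_ker P.mulVecLin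
    rw [Module.finrank_fin_fun] at h1
    have h2 : P.rank + Module.finrank ℝ (LinearMap.ker P.mulVecLin) = l := h1
    rw [hP] at h2
    have h3 : Module.finrank ℝ (LinearMap.ker P.mulVecLin) = 0 := by omega
    exact Submodule.finrank_eq_zero.mp h3
  have hinj : ∀ v : Fin l → ℝ, P *ᵥ v = 0 → v = 0 := by
    intro v hv
    have : v ∈ LinearMap.ker P.mulVecLin := by
      simpa [Matrix.mulVecLin_apply] using hv
    simpa [hker] using this
  have hre : P *ᵥ (fun j => (y j).re) = 0 := by
    funext i
    have := congrFun h i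
    have h2 : (((P.map Complex.ofReal) *ᵥ y) i).re = (P *ᵥ fun j => (y j).re) i := by
      simp [mulVec, dotProduct, Complex.re_sum, Matrix.map_apply]
    rw [this] at h2
    simpa using h2.symm
  have him : P *ᵥ (fun j => (y j).im) = 0 := by
    funext i
    have := congrFun h i
    have h2 : (((P.map Complex.ofReal) *ᵥ y) i).im = (P *ᵥ fun j => (y j).im) i := by
      simp [mulVec, dotProduct, Complex.im_sum, Matrix.map_apply]
    rw [this] at h2
    simpa using h2.symm
  have h1 := hinj _ hre
  have h2 := hinj _ him
  funext j
  exact Complex.ext (by simpa using congrFun h1 j) (by simpa using congrFun h2 j)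

end Aux

theorem block_matrix_hurwitz {n m : ℕ}
    (Q : Matrix (Fin n) (Fin n) ℝ) (P : Matrix (Fin n) (Fin m) ℝ)
    (hQsym : Q.IsSymm) (hQ : Q.PosDef) (hP : P.rank = m) :
    IsHurwitz (fromBlocks (-Q) (-P) Pᵀ 0) := by
  intro μ hμ
  set Qc : Matrix (Fin n) (Fin n) ℂ := Q.map Complex.ofReal with hQc
  set Pc : Matrix (Fin n) (Fin m) ℂ := P.map Complex.ofReal with hPc
  have hmap : (fromBlocks (-Q) (-P) Pᵀ 0).map Complex.ofReal
      = fromBlocks (-Qc) (-Pc) Pcᵀ 0 := by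
    ext i j
    cases i <;> cases j <;> simp [hQc, hPc, Matrix.map_apply]
  rw [hmap] at hμ
  rw [spectrum.mem_iff] at hμ
  rw [Matrix.isUnit_iff_isUnit_det, isUnit_iff_ne_zero, not_not] at hμ
  obtain ⟨v, hv0, hv⟩ := (Matrix.exists_mulVec_eq_zero_iff).mpr hμ
  have heig : (fromBlocks (-Qc) (-Pc) Pcᵀ 0) *ᵥ v = μ • v := by
    have h1 : (algebraMap ℂ (Matrix (Fin n ⊕ Fin m) (Fin n ⊕ Fin m) ℂ) μ
        - fromBlocks (-Qc) (-Pc) Pcᵀ 0) *ᵥ v = 0 := hv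
    rw [Matrix.sub_mulVec, Algebra.algebraMap_eq_smul_one, Matrix.smul_mulVec,
      Matrix.one_mulVec, sub_eq_zero] at h1
    exact h1.symm
  set x : Fin n → ℂ := v ∘ Sum.inl with hx
  set y : Fin m → ℂ := v ∘ Sum.inr with hy
  have hvelim : v = Sum.elim x y := by
    funext i; cases i <;> rfl
  rw [hvelim, Matrix.fromBlocks_mulVec] at heig
  have heq1 : (-Qc) *ᵥ x + (-Pc) *ᵥ y = μ • x := by
    funext i
    have := congrFun heig (Sum.inl i)
    simpa using this
  have heq2 : Pcᵀ *ᵥ x = μ • y := by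
    funext j
    have := congrFun heig (Sum.inr j)
    simpa using this
  -- dot with star x and star y
  have h1 : star x ⬝ᵥ ((-Qc) *ᵥ x) + star x ⬝ᵥ ((-Pc) *ᵥ y) = μ * (star x ⬝ᵥ x) := by
    have := congrArg (fun w => star x ⬝ᵥ w) heq1
    simpa [dotProduct_add, dotProduct_smul, smul_eq_mul] using this
  have h2 : star y ⬝ᵥ (Pcᵀ *ᵥ x) = μ * (star y ⬝ᵥ y) := by
    have := congrArg (fun w => star y ⬝ᵥ w) heq2
    simpa [dotProduct_smul, smul_eq_mul] using this
  -- conjugate symmetry of the cross terms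
  have hPcH : Pcᴴ = Pcᵀ := by
    ext i j
    simp [hPc, Matrix.conjTranspose_apply, Matrix.map_apply]
  have hcross : star y ⬝ᵥ (Pcᵀ *ᵥ x) = star (star x ⬝ᵥ (Pc *ᵥ y)) := by
    rw [Matrix.star_dotProduct x (Pc *ᵥ y), star_star, Matrix.star_mulVec,
      ← Matrix.dotProduct_mulVec, hPcH]
  -- case: x = 0
  by_cases hx0 : x = 0
  · exfalso
    have hPy : Pc *ᵥ y = 0 := by
      have := heq1
      rw [hx0] at this
      simpa [Matrix.mulVec_zero, Matrix.neg_mulVec, neg_eq_zero] using this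
    have hy0 : y = 0 := full_rank_map_mulVec_eq_zero hP hPy
    apply hv0
    rw [hvelim, hx0, hy0]
    funext i; cases i <;> rfl
  -- main case
  have hα : 0 < (star x ⬝ᵥ (Qc *ᵥ x)).re := posdef_map_re_pos hQ x hx0
  have hnx : (star x ⬝ᵥ x).re = ∑ i, Complex.normSq (x i) := star_dot_self_re x
  have hny : (star y ⬝ᵥ y).re = ∑ i, Complex.normSq (y i) := star_dot_self_re y
  have hix : (star x ⬝ᵥ x).im = 0 := star_dot_self_im x
  have hiy : (star y ⬝ᵥ y).im = 0 := star_dot_self_im y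
  have key : μ * (star x ⬝ᵥ x) + μ * (star y ⬝ᵥ y)
      = -(star x ⬝ᵥ (Qc *ᵥ x)) - (star x ⬝ᵥ (Pc *ᵥ y)) + star (star x ⬝ᵥ (Pc *ᵥ y)) := by
    rw [← h1, ← h2, hcross]
    simp [Matrix.neg_mulVec, dotProduct_neg]
    ring
  have keyre := congrArg Complex.re key
  have hS : 0 < (star x ⬝ᵥ x).re := by
    rw [hnx]
    have ⟨i, hi⟩ : ∃ i, x i ≠ 0 := by
      by_contra h; push_neg at h; exact hx0 (funext h)
    exact Finset.sum_pos' (fun j _ => Complex.normSq_nonneg _)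
      ⟨i, Finset.mem_univ i, Complex.normSq_pos.mpr hi⟩
  have hS2 : 0 ≤ (star y ⬝ᵥ y).re := by
    rw [hny]
    exact Finset.sum_nonneg fun j _ => Complex.normSq_nonneg _
  have lhsre : (μ * (star x ⬝ᵥ x) + μ * (star y ⬝ᵥ y)).re
      = μ.re * ((star x ⬝ᵥ x).re + (star y ⬝ᵥ y).re) := by
    simp [Complex.add_re, Complex.mul_re, hix, hiy]
    ring
  have rhsre : (-(star x ⬝ᵥ (Qc *ᵥ x)) - (star x ⬝ᵥ (Pc *ᵥ y))
      + star (star x ⬝ᵥ (Pc *ᵥ y))).re = -(star x ⬝ᵥ (Qc *ᵥ x)).re := by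
    simp [Complex.add_re, Complex.sub_re, Complex.neg_re, Complex.star_def, Complex.conj_re]
  rw [lhsre, rhsre] at keyre
  nlinarith [hα, hS, hS2, keyre]
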